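/- Define rational numbers C_p by C_0 = 1 and Σ_{q=0}^p C_{p−q}/(2q+1)! = 0 for p ≥ 1. Then for all p ≥ 0, Σ_{q=0}^p 2^{2q+1}·C_{p−q}/(2q+2)! = 1/(2p+1)!. -/

import Mathlib

open Finset

-- pair up a sum over range (2*m)
lemma sum_range_pair (m : ℕ) (g : ℕ → ℚ) :
    ∑ i ∈ range (2 * m), g i = ∑ j ∈ range m, (g (2 * j) + g (2 * j + 1)) := by
  induction m with
  | zero => simp
  | succ m ih =>
    have : 2 * (m + 1) = (2 * m + 1) + 1 := by ring
    rw [this, sum_range_succ, sum_range_succ, ih, sum_range_succ]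
    ring

-- sum of odd-index binomial coefficients
lemma odd_choose_sum (q : ℕ) :
    ∑ j ∈ range (q + 1), (((2 * q + 2).choose (2 * j + 1) : ℚ)) = 2 ^ (2 * q + 1) := by
  set n := 2 * q + 2 with hn
  have h1 : ∑ i ∈ range (n + 1), ((n.choose i : ℚ)) = 2 ^ n := by
    have := Nat.sum_range_choose n
    have := congrArg (fun x : ℕ => (x : ℚ)) this
    push_cast at this
    simpa using this
  have h2 : ∑ i ∈ range (n + 1), ((-1 : ℚ)) ^ i * (n.choose i : ℚ) = 0 := by
    have := @Int.alternating_sum_range_choose n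
    have h0 : n ≠ 0 := by omega
    rw [if_neg h0] at this
    have := congrArg (fun x : ℤ => (x : ℚ)) this
    push_cast at this
    simpa using this
  have hsplit : ∀ g : ℕ → ℚ, ∑ i ∈ range (n + 1), g i
      = (∑ j ∈ range (q + 1), (g (2 * j) + g (2 * j + 1))) + g (2 * q + 2) := by
    intro g
    have h : n + 1 = 2 * (q + 1) + 1 := by omega
    rw [h, sum_range_succ, sum_range_pair]
    congr 1
  rw [hsplit] at h1 h2
  have he : ∀ j, ((-1 : ℚ)) ^ (2 * j) * (n.choose (2 * j) : ℚ) = (n.choose (2 * j) : ℚ) := by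
    intro j; rw [pow_mul]; norm_num
  have ho : ∀ j, ((-1 : ℚ)) ^ (2 * j + 1) * (n.choose (2 * j + 1) : ℚ)
      = -(n.choose (2 * j + 1) : ℚ) := by
    intro j; rw [pow_succ, pow_mul]; norm_num
  simp only [he, ho] at h2
  have hsgn : ((-1 : ℚ)) ^ (2 * q + 2) = 1 := by
    rw [pow_succ, pow_succ, pow_mul]; norm_num
  rw [hsgn, one_mul] at h2
  have h2' : (∑ j ∈ range (q + 1), (n.choose (2 * j) : ℚ))
      - (∑ j ∈ range (q + 1), (n.choose (2 * j + 1) : ℚ))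
      + (n.choose (2 * q + 2) : ℚ) = 0 := by
    rw [← sum_sub_distrib, ← h2]
    congr 1
    apply sum_congr rfl
    intro x _
    ring
  rw [sum_add_distrib] at h1
  have hpow : (2 : ℚ) ^ n = 2 * 2 ^ (2 * q + 1) := by
    rw [hn, show 2 * q + 2 = (2 * q + 1) + 1 by ring, pow_succ]; ring
  nlinarith [h1, h2', hpow]

lemma conv_coeff (q : ℕ) :
    ∑ j ∈ range (q + 1),
      (1 / (Nat.factorial (2 * j + 1) : ℚ)) * (1 / (Nat.factorial (2 * (q - j) + 1) : ℚ))
      = 2 ^ (2 * q + 1) / (Nat.factorial (2 * q + 2) : ℚ) := by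
  have hfac : (Nat.factorial (2 * q + 2) : ℚ) ≠ 0 := by
    exact_mod_cast Nat.factorial_ne_zero _
  rw [eq_div_iff hfac, Finset.sum_mul, ← odd_choose_sum q]
  apply sum_congr rfl
  intro j hj
  have hj' : j ≤ q := by simpa [Nat.lt_succ_iff] using hj
  have hk : 2 * j + 1 ≤ 2 * q + 2 := by omega
  have hsub : 2 * q + 2 - (2 * j + 1) = 2 * (q - j) + 1 := by omega
  have hcf := Nat.choose_mul_factorial_mul_factorial hk
  rw [hsub] at hcf
  have hcf' := congrArg (fun x : ℕ => (x : ℚ)) hcf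
  push_cast at hcf'
  have h1 : (Nat.factorial (2 * j + 1) : ℚ) ≠ 0 := by exact_mod_cast Nat.factorial_ne_zero _
  have h2 : (Nat.factorial (2 * (q - j) + 1) : ℚ) ≠ 0 := by
    exact_mod_cast Nat.factorial_ne_zero _
  field_simp
  linarith [hcf']

lemma sum_triangle (n : ℕ) (f : ℕ → ℕ → ℚ) :
    ∑ q ∈ range (n + 1), ∑ j ∈ range (q + 1), f j (q - j)
      = ∑ j ∈ range (n + 1), ∑ r ∈ range (n - j + 1), f j r := by
  induction n with
  | zero => simp
  | succ n ih =>
    rw [sum_range_succ, ih]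
    conv_rhs => rw [sum_range_succ]
    have h1 : ∑ j ∈ range (n + 1), ∑ r ∈ range (n + 1 - j + 1), f j r
        = ∑ j ∈ range (n + 1), (∑ r ∈ range (n - j + 1), f j r + f j (n + 1 - j)) := by
      apply sum_congr rfl
      intro j hj
      have hj' : j ≤ n := by simpa [Nat.lt_succ_iff] using hj
      have h : n + 1 - j = (n - j) + 1 := by omega
      rw [h, sum_range_succ]
    rw [h1, sum_add_distrib, Nat.sub_self, sum_range_one]
    rw [show (∑ j ∈ range (n + 1 + 1), f j (n + 1 - j))
        = (∑ j ∈ range (n + 1), f j (n + 1 - j)) + f (n + 1) (n + 1 - (n + 1))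
      from sum_range_succ _ _, Nat.sub_self]
    ring

theorem C_recursion_c (C : ℕ → ℚ) (hC0 : C 0 = 1)
    (hCrec : ∀ p : ℕ, 1 ≤ p → ∑ q ∈ Finset.range (p + 1), C (p - q) / (Nat.factorial (2 * q + 1) : ℚ) = 0) (p : ℕ) :
    ∑ q ∈ Finset.range (p + 1), 2 ^ (2 * q + 1) * C (p - q) / (Nat.factorial (2 * q + 2) : ℚ) =
      1 / (Nat.factorial (2 * p + 1) : ℚ) := by
  have hdelta : ∀ m : ℕ, ∑ r ∈ range (m + 1), C (m - r) / (Nat.factorial (2 * r + 1) : ℚ)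
      = if m = 0 then 1 else 0 := by
    intro m
    rcases Nat.eq_zero_or_pos m with hm | hm
    · subst hm; simp [hC0, Nat.factorial]
    · rw [if_neg (by omega)]; exact hCrec m hm
  have step1 : ∑ q ∈ Finset.range (p + 1),
        2 ^ (2 * q + 1) * C (p - q) / (Nat.factorial (2 * q + 2) : ℚ)
      = ∑ q ∈ range (p + 1), ∑ j ∈ range (q + 1),
          1 / (Nat.factorial (2 * j + 1) : ℚ) *
            (C (p - j - (q - j)) / (Nat.factorial (2 * (q - j) + 1) : ℚ)) := by
    apply sum_congr rfl
    intro q hq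
    have h : 2 ^ (2 * q + 1) * C (p - q) / (Nat.factorial (2 * q + 2) : ℚ)
        = (2 ^ (2 * q + 1) / (Nat.factorial (2 * q + 2) : ℚ)) * C (p - q) := by ring
    rw [h, ← conv_coeff q, Finset.sum_mul]
    apply sum_congr rfl
    intro j hj
    have hj' : j ≤ q := by simpa [Nat.lt_succ_iff] using hj
    have hsub : p - j - (q - j) = p - q := by omega
    rw [hsub]
    ring
  have step2 := sum_triangle p (fun j r =>
    1 / (Nat.factorial (2 * j + 1) : ℚ) *
      (C (p - j - r) / (Nat.factorial (2 * r + 1) : ℚ)))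
  try simp only at step2
  rw [step1, step2]
  have step3 : ∀ j ∈ range (p + 1),
      ∑ r ∈ range (p - j + 1),
        1 / (Nat.factorial (2 * j + 1) : ℚ) *
          (C (p - j - r) / (Nat.factorial (2 * r + 1) : ℚ))
      = 1 / (Nat.factorial (2 * j + 1) : ℚ) * (if p - j = 0 then 1 else 0) := by
    intro j _
    rw [← Finset.mul_sum]
    congr 1
    exact hdelta (p - j)
  rw [sum_congr rfl step3, Finset.sum_eq_single p]
  · simp
  · intro b hb hbp
    have hb' : b < p + 1 := by simpa using hb
    have : p - b ≠ 0 := by omega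
    simp [this]
  · intro h
    simp at h
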